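/- arXiv:2002.07344 — 4 statements merged into one kernel-verified Lean document; each statement's English description precedes it below -/
import Mathlib

section
/- Let q ∈ ℂ× not a root of unity, ζ ∈ ℂ×, and let Q₊, Q₋, Λ ∈ ℂ[z] satisfy the QQ-system ζ Q₋(z) Q₊(qz) − ζ⁻¹ Q₋(qz) Q₊(z) = Λ(z). Suppose w is a root of Q₊ such that Λ(w) ≠ 0, Λ(q⁻¹w) ≠ 0, Q₋(w) ≠ 0, Q₊(qw) ≠ 0 and Q₊(q⁻¹w) ≠ 0. Then the Bethe Ansatz equation Λ(w)/Λ(q⁻¹w) = −ζ² · Q₊(qw)/Q₊(q⁻¹w) holds. -/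
open Polynomial

theorem stmt_6 (q ζ : ℂ) (hq0 : q ≠ 0) (hq : ∀ n : ℕ, 0 < n → q ^ n ≠ 1) (hζ : ζ ≠ 0)
    (Qp Qm Lam : ℂ[X])
    (hQQ : C ζ * Qm * Qp.comp (C q * X) - C ζ⁻¹ * Qm.comp (C q * X) * Qp = Lam)
    (w : ℂ) (hw : Qp.eval w = 0)
    (h1 : Lam.eval w ≠ 0) (h2 : Lam.eval (q⁻¹ * w) ≠ 0) (h3 : Qm.eval w ≠ 0)
    (h4 : Qp.eval (q * w) ≠ 0) (h5 : Qp.eval (q⁻¹ * w) ≠ 0) :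
    Lam.eval w / Lam.eval (q⁻¹ * w) =
      -ζ ^ 2 * (Qp.eval (q * w) / Qp.eval (q⁻¹ * w)) := by
  have e1 := congrArg (eval w) hQQ
  have e2 := congrArg (eval (q⁻¹ * w)) hQQ
  have hqw : q * (q⁻¹ * w) = w := by field_simp
  simp [eval_comp, hw, hqw] at e1 e2
  set A := eval w Qm
  set B := eval (q * w) Qp
  set Cc := eval (q⁻¹ * w) Qp
  rw [← e1, ← e2]
  field_simp
end

section
/- Let q ∈ ℂ× not a root of unity. Call two nonzero complex numbers v, w q-distinct if qᵐ v ≠ qⁿ w for all integers m, n. Let Λ, P₁, P₂ ∈ ℂ[z] be nonzero with P₁ and P₂ coprime, and suppose the roots of Λ are q-distinct from the roots of P₁ and of P₂. Let h ∈ ℂ[z] be a nonzero polynomial such that h(z)·P₁(z)/P₂(z) is a polynomial and the roots of h(z)h(qz)Λ(z) are q-distinct from the zeros and poles of h(z)P₁(z)/P₂(z). Then h(z) = a·P₂(z) for some a ∈ ℂ×. -/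
open Polynomial

theorem stmt_8 (q : ℂ) (hq0 : q ≠ 0) (hq : ∀ n : ℕ, 0 < n → q ^ n ≠ 1)
    (Lam P1 P2 h y : ℂ[X]) (hLam : Lam ≠ 0) (hP1 : P1 ≠ 0) (hP2 : P2 ≠ 0) (hh : h ≠ 0)
    (hcop : IsCoprime P1 P2)
    (hdist1 : ∀ x z : ℂ, Lam.eval x = 0 → P1.eval z = 0 → ∀ m n : ℤ, q ^ m * x ≠ q ^ n * z)
    (hdist2 : ∀ x z : ℂ, Lam.eval x = 0 → P2.eval z = 0 → ∀ m n : ℤ, q ^ m * x ≠ q ^ n * z)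
    -- `h·P₁/P₂` is the polynomial `y`
    (hy : h * P1 = y * P2)
    -- the roots of `h(z)h(qz)Λ(z)` are q-distinct from the zeros of `h·P₁/P₂`
    (hdist3 : ∀ x z : ℂ, (h * h.comp (C q * X) * Lam).eval x = 0 → y.eval z = 0 →
      ∀ m n : ℤ, q ^ m * x ≠ q ^ n * z) :
    ∃ a : ℂ, a ≠ 0 ∧ h = C a * P2 := by
  -- P2 divides h
  have hdvd : P2 ∣ h := hcop.symm.dvd_of_dvd_mul_right ⟨y, by linear_combination hy⟩
  obtain ⟨g, hg⟩ := hdvd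
  have hg0 : g ≠ 0 := by
    rintro rfl
    simp at hg
    exact hh hg
  -- y = g * P1
  have hygp : y = g * P1 := by
    have : P2 * (g * P1) = P2 * y := by
      rw [← mul_assoc, ← hg]
      linear_combination hy
    have := mul_left_cancel₀ hP2 this
    exact this.symm
  -- g has no roots
  have hnoroot : ∀ z : ℂ, g.eval z ≠ 0 := by
    intro z hz
    have hyz : y.eval z = 0 := by simp [hygp, hz]
    have hhz : (h * h.comp (C q * X) * Lam).eval z = 0 := by
      simp [hg, hz]
    exact hdist3 z z hhz hyz 0 0 rfl
  -- hence g is a nonzero constant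
  have hdeg : g.degree ≤ 0 := by
    by_contra hd
    push_neg at hd
    obtain ⟨z, hz⟩ := Complex.exists_root hd
    exact hnoroot z hz
  have ha := Polynomial.degree_le_zero_iff.mp hdeg
  refine ⟨g.coeff 0, ?_, ?_⟩
  · intro h0; rw [ha, h0] at hg0; simp at hg0
  · rw [hg, mul_comm]; exact congrArg (· * P2) ha
end

section
/- Let q, ζ ∈ ℂ×, q not a root of unity, and let Q₊, Q₋, Λ ∈ ℂ(z) be nonzero rational functions satisfying ζ Q₋(z) Q₊(qz) − ζ⁻¹ Q₋(qz) Q₊(z) = Λ(z). Set u(z) = −ζ Q₊(qz) Q₊(z)⁻¹ Λ(z)⁻¹ and define T(z) = ζ Q₊(q²z)/(Λ(qz) Q₊(qz)) + ζ⁻¹ Q₊(z)/(Λ(z) Q₊(qz)). Then the 2×2 matrix identity holds: n₋(u(qz)) · C(z) · n₋(−u(z)) = A(z), where C(z) is the matrix with rows (0, Λ(z)) and (−Λ(z)⁻¹, Λ(z)T(z)), n₋(x) is lower unitriangular with (2,1)-entry x, and A(z) is upper triangular with diagonal (ζ Q₊(qz)/Q₊(z), ζ⁻¹ Q₊(z)/Q₊(qz))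 and (1,2)-entry Λ(z). -/
open Polynomial

/-- The substitution homomorphism `f(z) ↦ f(qz)` on rational functions. -/
noncomputable def qSubst (q : ℂ) (hq : q ≠ 0) : RatFunc ℂ →+* RatFunc ℂ :=
  RatFunc.liftRingHom
    ((algebraMap ℂ[X] (RatFunc ℂ)).comp (eval₂RingHom Polynomial.C (Polynomial.C q * Polynomial.X)))
    (by
      intro p hp
      simp only [Submonoid.mem_comap, RingHom.coe_comp, Function.comp_apply]
      rw [mem_nonZeroDivisors_iff_ne_zero] at hp ⊢
      intro hcon
      apply hp
      rw [map_eq_zero_iff _ (IsFractionRing.injective ℂ[X] (RatFunc ℂ))] at hcon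
      have hc : p.comp (Polynomial.C q * Polynomial.X) = 0 := hcon
      rcases Polynomial.comp_eq_zero_iff.mp hc with h | ⟨-, h⟩
      · exact h
      · exfalso
        apply_fun (fun r => r.coeff 1) at h
        simp [Polynomial.coeff_C, hq] at h)

set_option maxHeartbeats 1000000 in
theorem stmt_12 (q ζ : ℂ) (hq0 : q ≠ 0) (hq : ∀ n : ℕ, 0 < n → q ^ n ≠ 1) (hζ : ζ ≠ 0)
    (Qp Qm Lam : RatFunc ℂ) (hQp : Qp ≠ 0) (hQm : Qm ≠ 0) (hLam : Lam ≠ 0)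
    (hQQ : RatFunc.C ζ * Qm * qSubst q hq0 Qp -
      RatFunc.C ζ⁻¹ * qSubst q hq0 Qm * Qp = Lam) :
    let σ := qSubst q hq0
    let u : RatFunc ℂ := -(RatFunc.C ζ) * σ Qp * Qp⁻¹ * Lam⁻¹
    let T : RatFunc ℂ := RatFunc.C ζ * σ (σ Qp) / (σ Lam * σ Qp) +
      RatFunc.C ζ⁻¹ * Qp / (Lam * σ Qp)
    !![1, 0; σ u, 1] * !![0, Lam; -Lam⁻¹, Lam * T] * !![1, 0; -u, 1] =
      !![RatFunc.C ζ * σ Qp / Qp, Lam; 0, RatFunc.C ζ⁻¹ * Qp / σ Qp] := by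
  intro σ u T
  have hσC : σ (RatFunc.C ζ) = RatFunc.C ζ := by
    rw [← RatFunc.algebraMap_C, ← div_one (algebraMap ℂ[X] (RatFunc ℂ) (Polynomial.C ζ)),
      show (1 : RatFunc ℂ) = algebraMap ℂ[X] (RatFunc ℂ) 1 from (map_one _).symm]
    rw [show σ = qSubst q hq0 from rfl, qSubst, RatFunc.liftRingHom_apply_div]
    simp
  have hCζ : RatFunc.C ζ ≠ 0 := by simpa using hζ
  have hσQp : σ Qp ≠ 0 := (map_ne_zero_iff σ σ.injective).mpr hQp
  have hσLam : σ Lam ≠ 0 := (map_ne_zero_iff σ σ.injective).mpr hLam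
  have hu : σ u = -(RatFunc.C ζ) * σ (σ Qp) * (σ Qp)⁻¹ * (σ Lam)⁻¹ := by
    simp only [u, map_mul, map_neg, map_inv₀, hσC]
  ext i j
  fin_cases i <;> fin_cases j <;>
    simp only [Matrix.mul_apply, Fin.sum_univ_two, Matrix.cons_val', Matrix.cons_val_zero,
      Matrix.cons_val_one, Matrix.head_cons, Matrix.empty_val', Matrix.cons_val_fin_one,
      Matrix.head_fin_const, hu, u, T]
  all_goals rw [← sub_eq_zero]
  all_goals field_simp [hCζ, hQp, hLam, hσQp, hσLam, sub_eq_zero]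
  all_goals try ring
  all_goals try field_simp
  all_goals try simp [div_self, div_eq_iff, sub_eq_zero, mul_ne_zero, pow_ne_zero, hCζ, hQp, hLam,
    hσQp, hσLam]
  all_goals try ring
  all_goals field_simp [hCζ, hQp, hLam, hσQp, hσLam]
  all_goals ring
end

section
/- Let q ∈ ℂ× not a root of unity, ζ ∈ ℂ×, and let Q₊, Q₋, Λ ∈ ℂ(z) be nonzero and satisfy ζ Q₋(z) Q₊(qz) − ζ⁻¹ Q₋(qz) Q₊(z) = Λ(z). Let A(z) be the upper triangular matrix with diagonal (ζ Q₊(qz)/Q₊(z), ζ⁻¹ Q₊(z)/Q₊(qz)) and (1,2)-entry Λ(z), and set μ(z) = 1/(Q₊(z) Q₋(z)). Then e^{μ(qz)F} · A(z) · e^{−μ(z)F} equals the upper triangular matrix with diagonal (ζ⁻¹ Q₋(qz)/Q₋(z), ζ Q₋(z)/Q₋(qz)) and (1,2)-entry Λ(z). -/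
open Polynomial

theorem stmt_17 (q ζ : ℂ) (hq0 : q ≠ 0) (hq : ∀ n : ℕ, 0 < n → q ^ n ≠ 1) (hζ : ζ ≠ 0)
    (Qp Qm Lam : RatFunc ℂ) (hQp : Qp ≠ 0) (hQm : Qm ≠ 0) (hLam : Lam ≠ 0)
    (hQQ : RatFunc.C ζ * Qm * qSubst q hq0 Qp -
      RatFunc.C ζ⁻¹ * qSubst q hq0 Qm * Qp = Lam) :
    let σ := qSubst q hq0
    let μ : RatFunc ℂ := (Qp * Qm)⁻¹
    !![1, 0; σ μ, 1] *
        !![RatFunc.C ζ * σ Qp / Qp, Lam; 0, RatFunc.C ζ⁻¹ * Qp / σ Qp] *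
        !![1, 0; -μ, 1] =
      !![RatFunc.C ζ⁻¹ * σ Qm / Qm, Lam; 0, RatFunc.C ζ * Qm / σ Qm] := by
  intro σ μ
  have hinj : Function.Injective σ := (qSubst q hq0).injective
  have hsQp : σ Qp ≠ 0 := fun h => hQp (hinj (by simpa using h))
  have hsQm : σ Qm ≠ 0 := fun h => hQm (hinj (by simpa using h))
  have hCζ : (RatFunc.C ζ : RatFunc ℂ) ≠ 0 := fun h =>
    hζ ((RatFunc.C (K := ℂ)).injective (by simpa using h))
  have hμ : σ μ = (σ Qp * σ Qm)⁻¹ := by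
    simp [μ, map_inv₀, map_mul]
  subst hQQ
  have hCinv : (RatFunc.C ζ⁻¹ : RatFunc ℂ) = (RatFunc.C ζ)⁻¹ := map_inv₀ _ _
  ext i j
  fin_cases i <;> fin_cases j <;>
    simp [Matrix.mul_apply, Fin.sum_univ_two, hμ, μ, hCinv]
  · field_simp
    ring
  · field_simp
    simp only [σ, mul_zero]
    ring
  · field_simp
    ring
end
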